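/- Let K be a field, M, A ∈ K[x] with n = deg M ≥ 1, let I = ⟨M, y − A⟩ ⊆ K[x,y], and let δ ≥ 1. Then the set I_δ = { f ∈ I : deg_y f < δ } is a free K[x]-submodule of { f ∈ K[x,y] : deg_y f < δ } of rank δ, with basis { M, (y − A), y·(y − A), ..., y^{δ−2}·(y − A) }. -/

import Mathlib

open Polynomial

theorem stmt_14 {K : Type*} [Field K] (M A : Polynomial K) (hM : 1 ≤ M.natDegree)
    (δ : ℕ) (hδ : 1 ≤ δ)
    (v : Fin δ → Polynomial (Polynomial K))
    (hv : ∀ j : Fin δ, v j = if (j : ℕ) = 0 then C M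
        else X ^ ((j : ℕ) - 1) * (X - C A)) :
    LinearIndependent (Polynomial K) v ∧
      (Submodule.span (Polynomial K) (Set.range v) : Set (Polynomial (Polynomial K)))
        = {f | f ∈ Ideal.span ({C M, X - C A} : Set (Polynomial (Polynomial K)))
            ∧ f.degree < (δ : ℕ)} := by
  classical
  obtain ⟨m, rfl⟩ : ∃ m, δ = m + 1 := ⟨δ - 1, (Nat.succ_pred_eq_of_pos hδ).symm⟩
  have hM0 : M ≠ 0 := fun h => by simp [h] at hM
  have hv0 : v 0 = C M := by simpa using hv 0
  have hvs : ∀ i : Fin m, v i.succ = X ^ (i : ℕ) * (X - C A) := by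
    intro i
    rw [hv]
    simp [Fin.val_succ]
  constructor
  · rw [Fintype.linearIndependent_iff]
    intro c hc
    rw [Fin.sum_univ_succ, hv0] at hc
    simp only [hvs] at hc
    have h0 : c 0 = 0 := by
      have h := congrArg (Polynomial.eval A) hc
      simp [eval_finset_sum, smul_eq_C_mul] at h
      exact h.resolve_right hM0
    rw [h0, zero_smul, zero_add] at hc
    have hfac : (∑ i : Fin m, c i.succ • X ^ (i : ℕ)) * (X - C A) = 0 := by
      rw [Finset.sum_mul, ← hc]
      congr 1
      ext i
      rw [smul_mul_assoc]
    have hg : (∑ i : Fin m, c i.succ • X ^ (i : ℕ)) = 0 :=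
      (mul_eq_zero.1 hfac).resolve_right (X_sub_C_ne_zero A)
    intro i
    refine Fin.cases h0 (fun j => ?_) i
    have h := congrArg (fun p => Polynomial.coeff p (j : ℕ)) hg
    simpa [coeff_smul, coeff_X_pow, Fin.val_eq_val, Finset.sum_ite_eq'] using h
  · ext f
    simp only [SetLike.mem_coe, Set.mem_setOf_eq]
    constructor
    · intro hf
      have hle : Submodule.span (Polynomial K) (Set.range v) ≤
          (Ideal.span ({C M, X - C A} : Set (Polynomial (Polynomial K)))).restrictScalars
              (Polynomial K) ⊓
            degreeLT (Polynomial K) (m + 1) := by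
        refine Submodule.span_le.2 ?_
        rintro _ ⟨j, rfl⟩
        refine Fin.cases ?_ (fun i => ?_) j
        · rw [hv0]
          refine ⟨Ideal.subset_span (Set.mem_insert _ _), mem_degreeLT.2 ?_⟩
          exact lt_of_le_of_lt degree_C_le (by exact_mod_cast Nat.succ_pos m)
        · rw [hvs]
          refine ⟨Ideal.mul_mem_left _ _ (Ideal.subset_span (Set.mem_insert_of_mem _ rfl)),
            mem_degreeLT.2 ?_⟩
          rw [degree_mul, degree_X_pow, degree_X_sub_C]
          exact_mod_cast Nat.succ_lt_succ i.isLt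
      obtain ⟨h1, h2⟩ := hle hf
      exact ⟨h1, mem_degreeLT.1 h2⟩
    · rintro ⟨hfI, hfd⟩
      have hev : f.eval A ∈ Ideal.span ({M} : Set (Polynomial K)) := by
        have hmap := Ideal.mem_map_of_mem (evalRingHom A) hfI
        rw [Ideal.map_span, Set.image_insert_eq, Set.image_singleton] at hmap
        simpa [Ideal.span_insert, Set.singleton_zero, Ideal.span_zero] using hmap
      obtain ⟨h, hh⟩ := Ideal.mem_span_singleton'.1 hev
      -- hh : h * M = f.eval A
      set q := f /ₘ (X - C A) with hqdef
      have hfe : C (f.eval A) + (X - C A) * q = f := by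
        rw [← modByMonic_X_sub_C_eq_C_eval]
        exact modByMonic_add_div f (X - C A)
      have hmem : (X - C A) * q ∈ Submodule.span (Polynomial K) (Set.range v) := by
        by_cases hq0 : q = 0
        · simp [hq0]
        · have h1 : ((X - C A) * q).degree < ((m + 1 : ℕ) : WithBot ℕ) := by
            have : (X - C A) * q = f - C (f.eval A) := by
              linear_combination hfe
            rw [this]
            refine lt_of_le_of_lt (degree_sub_le _ _) (max_lt hfd ?_)
            exact lt_of_le_of_lt degree_C_le (by exact_mod_cast Nat.succ_pos m)
          have hdq : q.degree < (m : WithBot ℕ) := by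
            rw [degree_mul, degree_X_sub_C, degree_eq_natDegree hq0] at h1
            rw [degree_eq_natDegree hq0]
            have : (1 + q.natDegree : ℕ) < m + 1 := by exact_mod_cast h1
            exact_mod_cast by omega
          have hqlt : q ∈ degreeLT (Polynomial K) m := mem_degreeLT.2 hdq
          rw [degreeLT_eq_span_X_pow] at hqlt
          have himg : (X - C A) * q ∈
              Submodule.map (LinearMap.mulLeft (Polynomial K) (X - C A))
                (Submodule.span (Polynomial K)
                  ↑((Finset.range m).image fun n => (X : Polynomial (Polynomial K)) ^ n)) :=
            ⟨q, hqlt, rfl⟩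
          rw [Submodule.map_span] at himg
          refine Submodule.span_le.2 ?_ himg
          rintro _ ⟨_, hx, rfl⟩
          simp only [Finset.coe_image, Set.mem_image, Finset.mem_coe, Finset.mem_range] at hx
          obtain ⟨k, hk, rfl⟩ := hx
          have : (X - C A) * X ^ k = v (⟨k, hk⟩ : Fin m).succ := by
            rw [hvs]; ring
          rw [LinearMap.mulLeft_apply, this]
          exact Submodule.subset_span ⟨_, rfl⟩
      rw [← hfe, ← hh]
      refine Submodule.add_mem _ ?_ hmem
      have : C (h * M) = h • v 0 := by rw [hv0, smul_eq_C_mul, C_mul]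
      rw [this]
      exact Submodule.smul_mem _ _ (Submodule.subset_span ⟨0, rfl⟩)
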